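/- In Λ⊕^cbv, if M →_{β_v} 𝔫 and M →_⊕ 𝔰, then there exists a multidistribution 𝔯 such that 𝔫 ⇒⊕ 𝔯 and 𝔰 ⇒_{β_v} 𝔯. Consequently the liftings ⇒_{β_v} and ⇒⊕ diamond-commute. -/
import Mathlib

open scoped NNReal ENNReal

/-- A (raw) multidistribution on `X`: a finite multiset of weighted elements. -/
abbrev MDist (X : Type) := Multiset (ℝ≥0 × X)

namespace MDist

/-- Scalar multiplication of a multidistribution. -/
def scale {X : Type} (p : ℝ≥0) (m : MDist X) : MDist X :=
  m.map fun q => (p * q.1, q.2)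

/-- The singleton multidistribution `[1 M]`. -/
def single {X : Type} (M : X) : MDist X := {(1, M)}

/-- A multidistribution is proper when every weight lies in `(0,1]` and the
weights sum to at most `1`. -/
def Proper {X : Type} (m : MDist X) : Prop :=
  (∀ q ∈ m, 0 < q.1 ∧ q.1 ≤ 1) ∧ (m.map Prod.fst).sum ≤ 1

/-- The probability that the distribution associated to a multidistribution
assigns to an event `A`. -/
noncomputable def mass {X : Type} (m : MDist X) (A : Set X) : ℝ≥0∞ :=
  (m.map fun q => A.indicator (fun _ => (q.1 : ℝ≥0∞)) q.2).sum

end MDist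

/-- One component of the lifting: either keep the term or perform a step. -/
def LiftTerm {X : Type} (r : X → MDist X → Prop) (M : X) (m : MDist X) : Prop :=
  m = MDist.single M ∨ r M m

/-- The lifting of a relation `r ⊆ X × MDist X` to a binary relation on
multidistributions. -/
inductive Lift {X : Type} (r : X → MDist X → Prop) : MDist X → MDist X → Prop
  | nil : Lift r 0 0
  | cons {p : ℝ≥0} {M : X} {m s t : MDist X} :
      LiftTerm r M m → Lift r s t → Lift r ((p, M) ::ₘ s) (MDist.scale p m + t)
/-- Terms of `Λ⊕` (de Bruijn representation). -/
inductive Term : Type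
  | var : ℕ → Term
  | lam : Term → Term
  | app : Term → Term → Term
  | choice : Term → Term → Term
deriving DecidableEq

namespace Term

/-- Shifting of de Bruijn indices above a cutoff. -/
def liftAux (c : ℕ) : Term → Term
  | var k => if k < c then var k else var (k + 1)
  | lam M => lam (liftAux (c + 1) M)
  | app M N => app (liftAux c M) (liftAux c N)
  | choice M N => choice (liftAux c M) (liftAux c N)

/-- Capture-avoiding substitution `M[N/j]`. -/
def subst : Term → ℕ → Term → Term
  | var k, j, N => if k = j then N else if j < k then var (k - 1) else var k
  | lam M, j, N => lam (subst M (j + 1) (liftAux 0 N))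
  | app M P, j, N => app (subst M j N) (subst P j N)
  | choice M P, j, N => choice (subst M j N) (subst P j N)

/-- Values: variables and abstractions. -/
inductive IsValue : Term → Prop
  | var (n : ℕ) : IsValue (var n)
  | lam (M : Term) : IsValue (lam M)

/-- `β_v`-reduction, closed under arbitrary contexts. -/
inductive BetaStep : Term → Term → Prop
  | beta {M V : Term} : IsValue V → BetaStep (app (lam M) V) (subst M 0 V)
  | appL {M M' N : Term} : BetaStep M M' → BetaStep (app M N) (app M' N)
  | appR {M N N' : Term} : BetaStep N N' → BetaStep (app M N) (app M N')
  | lam {M M' : Term} : BetaStep M M' → BetaStep (lam M) (lam M')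
  | chL {M M' N : Term} : BetaStep M M' → BetaStep (choice M N) (choice M' N)
  | chR {M N N' : Term} : BetaStep N N' → BetaStep (choice M N) (choice M N')

/-- Surface `β_v`-reduction: closure under surface contexts `S ::= □ | MS | SM`. -/
inductive SurfBetaStep : Term → Term → Prop
  | beta {M V : Term} : IsValue V → SurfBetaStep (app (lam M) V) (subst M 0 V)
  | appL {M M' N : Term} : SurfBetaStep M M' → SurfBetaStep (app M N) (app M' N)
  | appR {M N N' : Term} : SurfBetaStep N N' → SurfBetaStep (app M N) (app M N')

/-- `PlusStep M A B` holds when `M = S(P ⊕ Q)`, `A = S(P)`, `B = S(Q)` for a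
surface context `S ::= □ | MS | SM`. -/
inductive PlusStep : Term → Term → Term → Prop
  | choice {M N : Term} : PlusStep (choice M N) M N
  | appL {M A B N : Term} : PlusStep M A B → PlusStep (app M N) (app A N) (app B N)
  | appR {M N A B : Term} : PlusStep N A B → PlusStep (app M N) (app M A) (app M B)

end Term

open Term

/-- The reduction `→_{β_v} ⊆ Λ⊕ × MDST(Λ⊕)`. -/
def betaRed (M : Term) (m : MDist Term) : Prop :=
  ∃ N, BetaStep M N ∧ m = MDist.single N

/-- The probabilistic reduction `→_⊕ ⊆ Λ⊕ × MDST(Λ⊕)`. -/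
def plusRed (M : Term) (m : MDist Term) : Prop :=
  ∃ A B, PlusStep M A B ∧ m = {((1 : ℝ≥0) / 2, A), ((1 : ℝ≥0) / 2, B)}

/-- The full reduction `→ = →_{β_v} ∪ →_⊕`. -/
def red (M : Term) (m : MDist Term) : Prop := betaRed M m ∨ plusRed M m

/-- Surface reduction `→ₛ`: β_v and ⊕ rules closed under surface contexts. -/
def surfRed (M : Term) (m : MDist Term) : Prop :=
  (∃ N, SurfBetaStep M N ∧ m = MDist.single N) ∨ plusRed M m

/-- A step is deep when it is not a surface step. -/
def deepRed (M : Term) (m : MDist Term) : Prop := red M m ∧ ¬ surfRed M m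

/- ===== auxiliary lemmas ===== -/

namespace MDist

lemma scale_cons {X : Type} (p q : ℝ≥0) (M : X) (m : MDist X) :
    scale p ((q, M) ::ₘ m) = (p * q, M) ::ₘ scale p m := Multiset.map_cons _ _ _

lemma scale_add' {X : Type} (p : ℝ≥0) (m n : MDist X) :
    scale p (m + n) = scale p m + scale p n := Multiset.map_add _ _ _

lemma scale_scale {X : Type} (p q : ℝ≥0) (m : MDist X) :
    scale p (scale q m) = scale (p * q) m := by
  simp [scale, Multiset.map_map, Function.comp, mul_assoc]

lemma scale_one {X : Type} (m : MDist X) : scale 1 m = m := by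
  simp [scale]

lemma scale_single {X : Type} (p : ℝ≥0) (M : X) :
    scale p (single M) = {(p, M)} := by
  simp [scale, single]

end MDist

lemma Lift.refl {X : Type} {r : X → MDist X → Prop} : ∀ m : MDist X, Lift r m m := by
  intro m
  induction m using Multiset.induction with
  | empty => exact Lift.nil
  | cons a t ih =>
      have h := Lift.cons (p := a.1) (M := a.2) (r := r) (Or.inl rfl) ih
      simpa [MDist.scale_single, Multiset.singleton_add] using h

lemma lift_of_liftTerm {X : Type} {r : X → MDist X → Prop} {M : X} {m : MDist X}
    (h : LiftTerm r M m) : Lift r (MDist.single M) m := by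
  have h2 := Lift.cons (p := 1) (M := M) (s := 0) (t := 0) h Lift.nil
  simpa [MDist.single, MDist.scale_one] using h2

lemma Lift.add {X : Type} {r : X → MDist X → Prop} {a b c d : MDist X}
    (h1 : Lift r a b) (h2 : Lift r c d) : Lift r (a + c) (b + d) := by
  induction h1 with
  | nil => simpa using h2
  | cons hM hs ih =>
      rename_i p M m s t
      have h := Lift.cons (p := p) hM ih
      simpa [Multiset.cons_add, add_assoc] using h

lemma Lift.scale {X : Type} {r : X → MDist X → Prop} (p : ℝ≥0) {a b : MDist X}
    (h : Lift r a b) : Lift r (MDist.scale p a) (MDist.scale p b) := by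
  induction h with
  | nil => exact Lift.nil
  | cons hM hs ih =>
      rename_i q M m s t
      have h := Lift.cons (p := p * q) hM ih
      simpa [MDist.scale_cons, MDist.scale_add', MDist.scale_scale] using h

lemma lift_zero_inv {X : Type} {r : X → MDist X → Prop} {m s : MDist X}
    (h : Lift r m s) (hm : m = 0) : s = 0 := by
  cases h with
  | nil => rfl
  | cons hM hs => exact absurd hm (Multiset.cons_ne_zero)

lemma lift_cons_inv {X : Type} {r : X → MDist X → Prop} :
    ∀ {m n : MDist X}, Lift r m n → ∀ {p : ℝ≥0} {M : X} {t : MDist X},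
      m = (p, M) ::ₘ t →
      ∃ mM n', LiftTerm r M mM ∧ Lift r t n' ∧ n = MDist.scale p mM + n' := by
  intro m n h
  induction h with
  | nil =>
      intro p M t ht
      exact absurd ht.symm (Multiset.cons_ne_zero)
  | cons hM hs ih =>
      rename_i q P mP s n'
      intro p M t ht
      rcases Multiset.cons_eq_cons.mp ht.symm with ⟨hqp, hst⟩ | ⟨_, u, htu, hsu⟩
      · injection hqp with h1 h2
        subst h1; subst h2
        exact ⟨mP, n', hM, by rw [hst]; exact hs, rfl⟩
      · obtain ⟨mM, n'', hMt, hu, hn'⟩ := ih hsu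
        refine ⟨mM, MDist.scale q mP + n'', hMt, ?_, ?_⟩
        · rw [htu]; exact Lift.cons hM hu
        · rw [hn', add_left_comm]

open Term in
lemma plus_no_value : ∀ {V A B : Term}, IsValue V → PlusStep V A B → False := by
  intro V A B hV hP
  cases hV <;> cases hP

open Term in
lemma beta_plus_local : ∀ {M N A B : Term}, BetaStep M N → PlusStep M A B →
    ∃ A' B', PlusStep N A' B' ∧ (A = A' ∨ BetaStep A A') ∧ (B = B' ∨ BetaStep B B') := by
  intro M N A B hβ hp
  induction hp generalizing N with
  | choice =>
      cases hβ with
      | chL h => exact ⟨_, _, PlusStep.choice, Or.inr h, Or.inl rfl⟩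
      | chR h => exact ⟨_, _, PlusStep.choice, Or.inl rfl, Or.inr h⟩
  | appL hp ih =>
      rename_i M1 A1 B1 N1
      cases hβ with
      | beta hV => exact (plus_no_value (IsValue.lam _) hp).elim
      | appL h =>
          obtain ⟨A', B', h1, h2, h3⟩ := ih h
          exact ⟨app A' N1, app B' N1, PlusStep.appL h1,
            h2.imp (fun e => by rw [e]) BetaStep.appL,
            h3.imp (fun e => by rw [e]) BetaStep.appL⟩
      | appR h =>
          exact ⟨app A1 _, app B1 _, PlusStep.appL hp,
            Or.inr (BetaStep.appR h), Or.inr (BetaStep.appR h)⟩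
  | appR hp ih =>
      rename_i M1 N1 A1 B1
      cases hβ with
      | beta hV => exact (plus_no_value hV hp).elim
      | appL h =>
          exact ⟨app _ A1, app _ B1, PlusStep.appR hp,
            Or.inr (BetaStep.appL h), Or.inr (BetaStep.appL h)⟩
      | appR h =>
          obtain ⟨A', B', h1, h2, h3⟩ := ih h
          exact ⟨app M1 A', app M1 B', PlusStep.appR h1,
            h2.imp (fun e => by rw [e]) BetaStep.appR,
            h3.imp (fun e => by rw [e]) BetaStep.appR⟩

lemma liftTerm_diamond {M : Term} {n s : MDist Term}
    (hn : LiftTerm betaRed M n) (hs : LiftTerm plusRed M s) :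
    ∃ r, Lift plusRed n r ∧ Lift betaRed s r := by
  rcases hn with rfl | hn
  · exact ⟨s, lift_of_liftTerm hs, Lift.refl s⟩
  rcases hs with rfl | hs
  · exact ⟨n, Lift.refl n, lift_of_liftTerm (Or.inr hn)⟩
  obtain ⟨N, hβ, rfl⟩ := hn
  obtain ⟨A, B, hp, rfl⟩ := hs
  obtain ⟨A', B', h1, h2, h3⟩ := beta_plus_local hβ hp
  refine ⟨{((1 : ℝ≥0) / 2, A'), ((1 : ℝ≥0) / 2, B')}, ?_, ?_⟩
  · exact lift_of_liftTerm (Or.inr ⟨A', B', h1, rfl⟩)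
  · have hA : LiftTerm betaRed A (MDist.single A') := by
      rcases h2 with rfl | h2
      · exact Or.inl rfl
      · exact Or.inr ⟨A', h2, rfl⟩
    have hB : LiftTerm betaRed B (MDist.single B') := by
      rcases h3 with rfl | h3
      · exact Or.inl rfl
      · exact Or.inr ⟨B', h3, rfl⟩
    have h := Lift.cons (p := (1 : ℝ≥0) / 2) hA
      (Lift.cons (p := (1 : ℝ≥0) / 2) hB Lift.nil)
    simpa [MDist.scale_single, Multiset.singleton_add] using h

lemma lift_diamond : ∀ {m n : MDist Term}, Lift betaRed m n →
    ∀ {s : MDist Term}, Lift plusRed m s →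
    ∃ r, Lift plusRed n r ∧ Lift betaRed s r := by
  intro m n h
  induction h with
  | nil =>
      intro s hs
      exact ⟨0, Lift.nil, by rw [lift_zero_inv hs rfl]; exact Lift.nil⟩
  | cons hM hm ih =>
      rename_i p M nM m₀ n₀
      intro s hs
      obtain ⟨sM, s₀, hsM, hs₀, rfl⟩ := lift_cons_inv hs rfl
      obtain ⟨rM, hr1, hr2⟩ := liftTerm_diamond hM hsM
      obtain ⟨r₀, hr3, hr4⟩ := ih hs₀
      exact ⟨MDist.scale p rM + r₀, Lift.add (Lift.scale p hr1) hr3,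
        Lift.add (Lift.scale p hr2) hr4⟩

/-- In `Λ⊕^cbv`, a β_v-step and a ⊕-step from the same term can be joined, and
consequently the liftings `⇒_{β_v}` and `⇒⊕` diamond-commute. -/
theorem beta_plus_diamond_commute :
    (∀ (M : Term) (n s : MDist Term), betaRed M n → plusRed M s →
      ∃ r, Lift plusRed n r ∧ Lift betaRed s r) ∧
    (∀ m n s : MDist Term, Lift betaRed m n → Lift plusRed m s →
      ∃ r, Lift plusRed n r ∧ Lift betaRed s r) := by
  constructor
  · intro M n s hn hs
    exact liftTerm_diamond (Or.inr hn) (Or.inr hs)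
  · intro m n s h1 h2
    exact lift_diamond h1 h2
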